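/- Let A be a real symmetric n×n matrix and let P be a real density matrix. If Q₁ and Q₂ are real density matrices, each distinct from P, such that there exist times t₁ > 0 and t₂ > 0 with U(t₁)·P·U(−t₁) = Q₁ and U(t₂)·P·U(−t₂) = Q₂, then Q₁ = Q₂. In other words, there is at most one real density matrix Q ≠ P to which P admits perfect state transfer. -/

import Mathlib

open Matrix
open scoped ComplexOrder

/-- The transition matrix `U(t) = exp(itA)`. -/
noncomputable def U {n : ℕ} (A : Matrix (Fin n) (Fin n) ℂ) (t : ℝ) :
    Matrix (Fin n) (Fin n) ℂ :=
  NormedSpace.exp (((t : ℂ) * Complex.I) • A)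

namespace Stmt11Aux

variable {n : ℕ} (A : Matrix (Fin n) (Fin n) ℂ)

lemma U_zero : U A 0 = 1 := by
  simp [U, NormedSpace.exp_zero]

lemma U_add (s t : ℝ) : U A (s + t) = U A s * U A t := by
  unfold U
  rw [show (((s + t : ℝ) : ℂ) * Complex.I) • A
      = ((s : ℂ) * Complex.I) • A + ((t : ℂ) * Complex.I) • A by
    push_cast; rw [← add_smul]; ring_nf]
  exact Matrix.exp_add_of_commute _ _ (((Commute.refl A).smul_left _).smul_right _)

lemma U_mul_U_neg (t : ℝ) : U A t * U A (-t) = 1 := by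
  rw [← U_add, add_neg_cancel, U_zero]

lemma U_neg_mul_U (t : ℝ) : U A (-t) * U A t = 1 := by
  rw [← U_add, neg_add_cancel, U_zero]

lemma conj_conj (s t : ℝ) (M : Matrix (Fin n) (Fin n) ℂ) :
    U A s * (U A t * M * U A (-t)) * U A (-s) = U A (s + t) * M * U A (-(s + t)) := by
  rw [U_add, show -(s + t) = -t + -s by ring, U_add]
  simp only [mul_assoc]

lemma conj_U (hAreal : ∀ i j, (A i j).im = 0) (hAsym : Aᵀ = A) (t : ℝ) :
    ((U A t)ᴴ)ᵀ = U A (-t) := by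
  unfold U
  rw [← Matrix.exp_conjTranspose, ← Matrix.exp_transpose]
  congr 1
  rw [conjTranspose_smul, transpose_smul]
  rw [show (Aᴴ)ᵀ = A by
    ext i j
    simp only [transpose_apply, conjTranspose_apply, RingHom.coe_coe]
    exact Complex.conj_eq_iff_im.mpr (hAreal i j)]
  congr 1
  simp [Complex.ext_iff]

lemma continuous_U : Continuous fun t : ℝ => U A t := by
  letI : SeminormedRing (Matrix (Fin n) (Fin n) ℂ) := Matrix.linftyOpSemiNormedRing
  letI : NormedRing (Matrix (Fin n) (Fin n) ℂ) := Matrix.linftyOpNormedRing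
  letI : NormedAlgebra ℂ (Matrix (Fin n) (Fin n) ℂ) := Matrix.linftyOpNormedAlgebra
  exact (continuous_iff_continuousAt.2 fun x => (NormedSpace.exp_analytic (𝕂 := ℂ) x).continuousAt).comp (by fun_prop)

end Stmt11Aux

open Stmt11Aux in
theorem stmt_11 {n : ℕ} (hn : 1 ≤ n)
    (A : Matrix (Fin n) (Fin n) ℂ)
    (hAreal : ∀ i j, (A i j).im = 0) (hAsym : Aᵀ = A)
    (P : Matrix (Fin n) (Fin n) ℂ)
    (hP : P.PosSemidef) (hPtr : P.trace = 1) (hPreal : ∀ i j, (P i j).im = 0)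
    (Q₁ Q₂ : Matrix (Fin n) (Fin n) ℂ)
    (hQ₁ : Q₁.PosSemidef) (hQ₁tr : Q₁.trace = 1) (hQ₁real : ∀ i j, (Q₁ i j).im = 0)
    (hQ₂ : Q₂.PosSemidef) (hQ₂tr : Q₂.trace = 1) (hQ₂real : ∀ i j, (Q₂ i j).im = 0)
    (hne₁ : Q₁ ≠ P) (hne₂ : Q₂ ≠ P)
    (t₁ : ℝ) (ht₁ : 0 < t₁) (hpst₁ : U A t₁ * P * U A (-t₁) = Q₁)
    (t₂ : ℝ) (ht₂ : 0 < t₂) (hpst₂ : U A t₂ * P * U A (-t₂) = Q₂) :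
    Q₁ = Q₂ := by
  classical
  have hreal_fix : ∀ (M : Matrix (Fin n) (Fin n) ℂ), (∀ i j, (M i j).im = 0) →
      (Mᴴ)ᵀ = M := by
    intro M hM
    ext i j
    simp only [transpose_apply, conjTranspose_apply, RingHom.coe_coe]
    exact Complex.conj_eq_iff_im.mpr (hM i j)
  -- conjugation trick: from U t * P * U (-t) = Q with P, Q real, get the reversed identity
  have hrev : ∀ (Q : Matrix (Fin n) (Fin n) ℂ) (t : ℝ), (∀ i j, (Q i j).im = 0) →
      U A t * P * U A (-t) = Q → U A (-t) * P * U A t = Q := by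
    intro Q t hQr h
    have := congrArg (fun M : Matrix (Fin n) (Fin n) ℂ => (Mᴴ)ᵀ) h
    simp only [conjTranspose_mul, transpose_mul] at this
    rwa [conj_U A hAreal hAsym, conj_U A hAreal hAsym, neg_neg,
      hreal_fix P hPreal, hreal_fix Q hQr] at this
  have hrev₁ := hrev Q₁ t₁ hQ₁real hpst₁
  have hrev₂ := hrev Q₂ t₂ hQ₂real hpst₂
  -- the stabilizer subgroup
  let G : AddSubgroup ℝ :=
    { carrier := {t | U A t * P * U A (-t) = P}
      zero_mem' := by simp [U_zero]
      add_mem' := by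
        intro a b ha hb
        simp only [Set.mem_setOf_eq] at ha hb ⊢
        calc U A (a + b) * P * U A (-(a + b))
            = U A a * (U A b * P * U A (-b)) * U A (-a) := (conj_conj A a b P).symm
          _ = U A a * P * U A (-a) := by rw [hb]
          _ = P := ha
      neg_mem' := by
        intro a ha
        simp only [Set.mem_setOf_eq] at ha ⊢
        have h := conj_conj A (-a) a P
        rw [ha, neg_add_cancel, neg_zero, U_zero, one_mul, mul_one, neg_neg] at h
        rw [neg_neg]
        exact h }
  have hG_mem : ∀ t, t ∈ G ↔ U A t * P * U A (-t) = P := fun _ => Iff.rfl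
  -- periodicity of t ↦ U t * P * U (-t) under G
  have hf_per : ∀ (s g : ℝ), g ∈ G →
      U A (s + g) * P * U A (-(s + g)) = U A s * P * U A (-s) := by
    intro s g hg
    rw [← conj_conj A s g P, (hG_mem g).mp hg]
  -- 2t ∈ G for both times
  have h2t : ∀ (Q : Matrix (Fin n) (Fin n) ℂ) (t : ℝ),
      U A t * P * U A (-t) = Q → U A (-t) * P * U A t = Q → (2 * t) ∈ G := by
    intro Q t h h'
    rw [hG_mem, show (2:ℝ) * t = t + t by ring, ← conj_conj A t t P, h, ← h']
    have hc := conj_conj A t (-t) P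
    rw [add_neg_cancel, neg_zero, U_zero, one_mul, mul_one, neg_neg] at hc
    exact hc
  have h2t₁ : (2 * t₁) ∈ G := h2t Q₁ t₁ hpst₁ hrev₁
  have h2t₂ : (2 * t₂) ∈ G := h2t Q₂ t₂ hpst₂ hrev₂
  have ht₁G : t₁ ∉ G := by
    rw [hG_mem, hpst₁]
    exact hne₁
  have ht₂G : t₂ ∉ G := by
    rw [hG_mem, hpst₂]
    exact hne₂
  rcases G.dense_or_cyclic with hd | ⟨a, ha⟩
  · -- dense case: contradiction via continuity
    exfalso
    have hfc : Continuous fun t : ℝ => U A t * P * U A (-t) := by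
      apply Continuous.matrix_mul
      apply Continuous.matrix_mul (continuous_U A)
      · exact continuous_const
      · exact (continuous_U A).comp continuous_neg
    have heq : (fun t : ℝ => U A t * P * U A (-t)) = fun _ => P :=
      hfc.ext_on hd continuous_const (fun x hx => hx)
    exact ht₁G ((hG_mem t₁).mpr (congrFun heq t₁))
  · -- cyclic case
    have key : ∀ t : ℝ, (2 * t) ∈ G → t ∉ G →
        U A t * P * U A (-t) = U A (a / 2) * P * U A (-(a / 2)) := by
      intro t h2 hnt
      rw [ha, AddSubgroup.mem_closure_singleton] at h2
      obtain ⟨k, hk⟩ := h2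
      have hk' : (k : ℝ) * a = 2 * t := by rw [← hk]; simp [zsmul_eq_mul]
      rcases Int.even_or_odd k with ⟨j, hj⟩ | ⟨j, hj⟩
      · exfalso
        apply hnt
        rw [ha, AddSubgroup.mem_closure_singleton]
        refine ⟨j, ?_⟩
        have : ((j : ℝ) + j) * a = 2 * t := by
          rw [← hk']; push_cast [hj]; ring
        simp only [zsmul_eq_mul]
        linarith
      · have hja : (j : ℤ) • a ∈ G := by
          rw [ha]
          exact AddSubgroup.zsmul_mem _
            (AddSubgroup.mem_closure_singleton.mpr ⟨1, one_smul ℤ a⟩) j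
        have htj : t = a / 2 + (j : ℝ) * a := by
          have : ((2 * (j : ℝ)) + 1) * a = 2 * t := by
            rw [← hk']; push_cast [hj]; ring
          linarith
        have := hf_per (a / 2) ((j : ℤ) • a) hja
        simp only [zsmul_eq_mul] at this
        rw [htj]
        exact this
    have h1 := key t₁ h2t₁ ht₁G
    have h2 := key t₂ h2t₂ ht₂G
    rw [← hpst₁, ← hpst₂, h1, h2]
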